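/- For parameters 0 < β < 1, t₀ > 0 and any real s_N, the upper truncation error of the RQ distribution satisfies ∫_{s_N}^{∞} f_RQ(s) ds = 1/2 − arctan(tan(πβ/2)·tanh(β(s_N − ln t₀)/2)) / (πβ). -/

import Mathlib

open MeasureTheory Real

/-- The Cole–Cole (RQ) distribution of relaxation times in the variable `s = ln t`. -/
noncomputable def fRQ (β t₀ : ℝ) (s : ℝ) : ℝ :=
  Real.sin (β * π) / (2 * π * (Real.cosh (β * (s - Real.log t₀)) + Real.cos (β * π)))

open Filter Topology


lemma tanh_eq' (x : ℝ) : Real.tanh x = (1 - Real.exp (-2*x)) / (1 + Real.exp (-2*x)) := by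
  have h1 : Real.exp (-2*x) = Real.exp (-x) * Real.exp (-x) := by
    rw [← Real.exp_add]; ring_nf
  have h2 : Real.exp x * Real.exp (-x) = 1 := by rw [← Real.exp_add]; simp
  have h3 : Real.exp x + Real.exp (-x) ≠ 0 := by positivity
  have h4 : (1:ℝ) + Real.exp (-2*x) ≠ 0 := by positivity
  rw [Real.tanh_eq_sinh_div_cosh, Real.sinh_eq, Real.cosh_eq]
  field_simp
  have h5 : Real.exp (-(2*x)) = Real.exp (-2*x) := by ring_nf
  have h6 : Real.exp (-(x*2)) = Real.exp (-x) * Real.exp (-x) := by rw [← Real.exp_add]; ring_nf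
  linear_combination (2*Real.exp x)*h6 + (2*Real.exp (-x))*h2

lemma tendsto_tanh_atTop : Tendsto Real.tanh atTop (𝓝 1) := by
  have h : Tendsto (fun x : ℝ => Real.exp (-2*x)) atTop (𝓝 0) := by
    apply Real.tendsto_exp_atBot.comp
    exact (tendsto_const_mul_atBot_of_neg (by norm_num : (-2:ℝ) < 0)).2 tendsto_id
  have h1 : Tendsto (fun x : ℝ => (1 - Real.exp (-2*x)) / (1 + Real.exp (-2*x))) atTop
      (𝓝 ((1 - 0) / (1 + 0))) :=
    (tendsto_const_nhds.sub h).div (tendsto_const_nhds.add h) (by norm_num)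
  simp only [sub_zero, add_zero, div_one] at h1
  exact h1.congr fun x => (tanh_eq' x).symm

lemma hasDerivAt_tanh' (x : ℝ) : HasDerivAt Real.tanh (1 / Real.cosh x ^ 2) x := by
  have h := (Real.hasDerivAt_sinh x).div (Real.hasDerivAt_cosh x) (Real.cosh_pos x).ne'
  have heq : (Real.cosh x * Real.cosh x - Real.sinh x * Real.sinh x) / Real.cosh x ^ 2
      = 1 / Real.cosh x ^ 2 := by
    rw [show Real.cosh x * Real.cosh x - Real.sinh x * Real.sinh x
        = Real.cosh x ^ 2 - Real.sinh x ^ 2 by ring, Real.cosh_sq_sub_sinh_sq]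
  rw [heq] at h
  have : Real.tanh = fun y => Real.sinh y / Real.cosh y := funext Real.tanh_eq_sinh_div_cosh
  rw [this]
  exact h

lemma key_alg (p q sθ cθ S C : ℝ) (hp : 0 < p) (hq : 0 < q) (hc : 0 < cθ) (hC : 0 < C)
    (hpy : sθ ^ 2 + cθ ^ 2 = 1) (hhy : C ^ 2 = S ^ 2 + 1) :
    (2 * sθ * cθ) / (2 * p * ((C ^ 2 + S ^ 2) + (2 * cθ ^ 2 - 1)))
      = 1 / (1 + (sθ / cθ * (S / C)) ^ 2) * (sθ / cθ * (1 / C ^ 2 * (q * 1 / 2))) / (p * q) := by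
  have hd : (C ^ 2 + S ^ 2) + (2 * cθ ^ 2 - 1) = 2 * (S ^ 2 + cθ ^ 2) := by linarith
  have hd2 : (0:ℝ) < S ^ 2 + cθ ^ 2 := by positivity
  have h1 : (0:ℝ) < 1 + (sθ / cθ * (S / C)) ^ 2 := by positivity
  rw [hd]
  field_simp
  ring_nf
  linear_combination (sθ*cθ^2)*hhy + (sθ*S^2)*hpy

theorem fRQ_upper_truncation (β t₀ sN : ℝ) (hβ₀ : 0 < β) (hβ₁ : β < 1) (ht₀ : 0 < t₀) :
    ∫ s in Set.Ioi sN, fRQ β t₀ s =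
      1 / 2 - Real.arctan (Real.tan (π * β / 2) *
        Real.tanh (β * (sN - Real.log t₀) / 2)) / (π * β) := by
  have hπ := Real.pi_pos
  set L := Real.log t₀ with hL
  set a := Real.tan (π * β / 2) with ha
  set F : ℝ → ℝ := fun s => Real.arctan (a * Real.tanh (β * (s - L) / 2)) / (π * β) with hF
  -- angle facts
  have hθ₁ : 0 < π * β / 2 := by positivity
  have hθ₂ : π * β / 2 < π / 2 := by nlinarith
  have hcθ : 0 < Real.cos (π * β / 2) :=
    Real.cos_pos_of_mem_Ioo ⟨by linarith, hθ₂⟩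
  have hsθ : 0 < Real.sin (π * β / 2) := Real.sin_pos_of_pos_of_lt_pi hθ₁ (by linarith)
  have hcos2 : Real.cos (β * π) = 2 * Real.cos (π * β / 2) ^ 2 - 1 := by
    rw [show β * π = 2 * (π * β / 2) by ring, Real.cos_two_mul]
  have hsin2 : Real.sin (β * π) = 2 * Real.sin (π * β / 2) * Real.cos (π * β / 2) := by
    rw [show β * π = 2 * (π * β / 2) by ring, Real.sin_two_mul]
  -- denominator positivity
  have hdenpos : ∀ x : ℝ, 0 < Real.cosh (β * (x - L)) + Real.cos (β * π) := by
    intro x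
    have h1 : (1:ℝ) ≤ Real.cosh (β * (x - L)) := Real.one_le_cosh _
    nlinarith
  -- derivative of F is fRQ
  have hder : ∀ x : ℝ, HasDerivAt F (fRQ β t₀ x) x := by
    intro x
    have hg : HasDerivAt (fun s : ℝ => β * (s - L) / 2) (β * 1 / 2) x :=
      (((hasDerivAt_id x).sub_const L).const_mul β).div_const 2
    set u := β * (x - L) / 2 with hu
    have ht : HasDerivAt (fun s : ℝ => Real.tanh (β * (s - L) / 2))
        (1 / Real.cosh u ^ 2 * (β * 1 / 2)) x := (hasDerivAt_tanh' u).comp (h₂ := Real.tanh) x hg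
    have harc : HasDerivAt (fun s : ℝ => Real.arctan (a * Real.tanh (β * (s - L) / 2)))
        (1 / (1 + (a * Real.tanh u) ^ 2) * (a * (1 / Real.cosh u ^ 2 * (β * 1 / 2)))) x :=
      (Real.hasDerivAt_arctan _).comp x (ht.const_mul a)
    have hFd := harc.div_const (π * β)
    refine hFd.congr_deriv ?_
    symm
    -- algebraic identity
    have hC := Real.cosh_pos u
    have hhy : Real.cosh u ^ 2 = Real.sinh u ^ 2 + 1 := Real.cosh_sq u
    have hpy : Real.sin (π * β / 2) ^ 2 + Real.cos (π * β / 2) ^ 2 = 1 :=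
      Real.sin_sq_add_cos_sq _
    have hcosh2 : Real.cosh (β * (x - L)) = Real.cosh u ^ 2 + Real.sinh u ^ 2 := by
      rw [show β * (x - L) = 2 * u by rw [hu]; ring, Real.cosh_two_mul]
    show Real.sin (β * π) / (2 * π * (Real.cosh (β * (x - L)) + Real.cos (β * π))) = _
    rw [hsin2, hcosh2, hcos2, ha, Real.tan_eq_sin_div_cos, Real.tanh_eq_sinh_div_cosh]
    exact key_alg π β _ _ _ _ hπ hβ₀ hcθ hC hpy hhy
  -- nonnegativity
  have hnn : ∀ x : ℝ, 0 ≤ fRQ β t₀ x := by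
    intro x
    have hs : 0 < Real.sin (β * π) := by rw [hsin2]; positivity
    have := hdenpos x
    unfold fRQ
    positivity
  -- limit at infinity
  have hl : Filter.Tendsto (fun s : ℝ => β * (s - L) / 2) Filter.atTop Filter.atTop := by
    apply Filter.Tendsto.atTop_div_const two_pos
    exact (Filter.tendsto_const_mul_atTop_of_pos hβ₀).2
      (Filter.tendsto_atTop_add_const_right _ (-L) Filter.tendsto_id |>.congr fun s => by simp only [id_eq]; ring)
  have hlim : Filter.Tendsto F Filter.atTop (𝓝 (1 / 2)) := by
    have h1 : Filter.Tendsto (fun s : ℝ => a * Real.tanh (β * (s - L) / 2))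
        Filter.atTop (𝓝 (a * 1)) := (tendsto_tanh_atTop.comp hl).const_mul a
    have h2 := ((Real.continuous_arctan.tendsto (a * 1)).comp h1).div_const (π * β)
    have h3 : Real.arctan (a * 1) / (π * β) = 1 / 2 := by
      rw [mul_one, ha, Real.arctan_tan (by linarith) hθ₂]
      field_simp
    rw [← h3]
    exact h2
  have key := integral_Ioi_of_hasDerivAt_of_nonneg' (a := sN)
    (fun x _ => hder x) (fun x _ => hnn x) hlim
  rw [key]
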